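/- For p > 0 and x ∈ (0,1), the inequality (∫₀ˣ t^p(t^p+1)(log(1/t))²/(1-t^p)³ dt) / (∫₀ˣ t^p log(1/t)/(1-t^p)² dt) > (x^p+1)·log(1/x)/(1-x^p) > 2 x^p log(1/x)/(1-x^p) holds. -/

import Mathlib

open Real Set Filter Topology

private lemma aux_h {u : ℝ} (hu : u ∈ Set.Ioo (0:ℝ) 1) :
    2 * (-Real.log u) < u⁻¹ - u := by
  obtain ⟨h0, h1⟩ := hu
  have hanti : StrictAntiOn (fun u : ℝ => u⁻¹ - u + 2 * Real.log u) (Set.Ioc 0 1) := by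
    apply strictAntiOn_of_deriv_neg (convex_Ioc 0 1)
    · apply ContinuousOn.add
      · exact ContinuousOn.sub
          (continuousOn_inv₀.mono (fun t ht => ne_of_gt ht.1)) continuousOn_id
      · exact continuousOn_const.mul (Real.continuousOn_log.mono (fun t ht => ne_of_gt ht.1))
    · intro t ht
      rw [interior_Ioc] at ht
      obtain ⟨ht0, ht1⟩ := ht
      have hd : HasDerivAt (fun u : ℝ => u⁻¹ - u + 2 * Real.log u)
          (-(t^2)⁻¹ - 1 + 2 * t⁻¹) t :=
        ((hasDerivAt_inv ht0.ne').sub (hasDerivAt_id t)).add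
          ((Real.hasDerivAt_log ht0.ne').const_mul 2)
      rw [hd.deriv]
      have hinv : t⁻¹ * t = 1 := inv_mul_cancel₀ ht0.ne'
      have h1t : 1 < t⁻¹ := (one_lt_inv₀ ht0).mpr ht1
      have hsq : (t^2)⁻¹ = t⁻¹ * t⁻¹ := by
        rw [sq, mul_inv]
      nlinarith [pow_pos (show (0:ℝ) < t⁻¹ - 1 by linarith) 2]
  have key := hanti (Set.mem_Ioc.mpr ⟨h0, h1.le⟩) (Set.mem_Ioc.mpr ⟨zero_lt_one, le_refl 1⟩) h1
  simp only [Real.log_one, inv_one] at key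
  linarith

private lemma phi_anti :
    StrictAntiOn (fun u : ℝ => (1 + u) * (-Real.log u) / (1 - u)) (Set.Ioo 0 1) := by
  apply strictAntiOn_of_deriv_neg (convex_Ioo 0 1)
  · apply ContinuousOn.div
    · exact (continuousOn_const.add continuousOn_id).mul
        ((Real.continuousOn_log.mono (fun t ht => ne_of_gt ht.1)).neg)
    · exact continuousOn_const.sub continuousOn_id
    · intro t ht
      exact sub_ne_zero.mpr ht.2.ne'
  · intro t ht
    rw [interior_Ioo] at ht
    obtain ⟨ht0, ht1⟩ := ht
    have hN : HasDerivAt (fun u : ℝ => (1 + u) * (-Real.log u))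
        ((0 + 1) * (-Real.log t) + (1 + t) * (-t⁻¹)) t :=
      ((hasDerivAt_const t 1).add (hasDerivAt_id t)).mul ((Real.hasDerivAt_log ht0.ne').neg)
    have hD : HasDerivAt (fun u : ℝ => 1 - u) (0 - 1) t :=
      (hasDerivAt_const t 1).sub (hasDerivAt_id t)
    have hDne : (1 : ℝ) - t ≠ 0 := sub_ne_zero.mpr ht1.ne'
    have hd := hN.div hD hDne
    rw [show deriv (fun u : ℝ => (1 + u) * (-Real.log u) / (1 - u)) t = _ from hd.deriv]
    apply div_neg_of_neg_of_pos
    · have hA := aux_h ⟨ht0, ht1⟩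
      have hE : ((0 + 1) * (-Real.log t) + (1 + t) * (-t⁻¹)) * (1 - t)
          - (1 + t) * (-Real.log t) * (0 - 1) = 2 * (-Real.log t) - (t⁻¹ - t) := by
        field_simp
        ring
      rw [hE]
      linarith
    · positivity

private lemma f_anti {p t x : ℝ} (hp : 0 < p) (ht : 0 < t) (htx : t < x) (hx1 : x < 1) :
    (x ^ p + 1) * Real.log (1 / x) / (1 - x ^ p)
      < (t ^ p + 1) * Real.log (1 / t) / (1 - t ^ p) := by
  have hx0 : 0 < x := ht.trans htx
  have ht1 : t < 1 := htx.trans hx1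
  have hut : t ^ p ∈ Set.Ioo (0:ℝ) 1 :=
    ⟨Real.rpow_pos_of_pos ht p, Real.rpow_lt_one ht.le ht1 hp⟩
  have hux : x ^ p ∈ Set.Ioo (0:ℝ) 1 :=
    ⟨Real.rpow_pos_of_pos hx0 p, Real.rpow_lt_one hx0.le hx1 hp⟩
  have hlt : t ^ p < x ^ p := Real.rpow_lt_rpow ht.le htx hp
  have key := phi_anti hut hux hlt
  simp only at key
  have et : (1 + t ^ p) * (-Real.log (t ^ p)) / (1 - t ^ p)
      = p * ((t ^ p + 1) * Real.log (1 / t) / (1 - t ^ p)) := by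
    rw [Real.log_rpow ht, one_div, Real.log_inv]
    ring
  have ex : (1 + x ^ p) * (-Real.log (x ^ p)) / (1 - x ^ p)
      = p * ((x ^ p + 1) * Real.log (1 / x) / (1 - x ^ p)) := by
    rw [Real.log_rpow hx0, one_div, Real.log_inv]
    ring
  rw [et, ex] at key
  exact lt_of_mul_lt_mul_left key hp.le

private lemma tendsto_aux {p : ℝ} (hp : 0 < p) :
    Tendsto (fun t : ℝ => t ^ p * Real.log (1 / t)) (𝓝[>] 0) (𝓝 0) := by
  have h := (tendsto_log_mul_rpow_nhdsGT_zero hp).neg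
  rw [neg_zero] at h
  apply h.congr'
  filter_upwards [self_mem_nhdsWithin] with t _
  rw [one_div, Real.log_inv]
  ring

private lemma tendsto_rpow0 {p : ℝ} (hp : 0 < p) :
    Tendsto (fun t : ℝ => t ^ p) (𝓝[>] 0) (𝓝 0) := by
  have h := (Real.continuousAt_rpow_const 0 p (Or.inr hp.le)).tendsto
  rw [Real.zero_rpow hp.ne'] at h
  exact h.mono_left nhdsWithin_le_nhds

private lemma contOn_g {p x : ℝ} (hp : 0 < p) (hx0 : 0 < x) (hx1 : x < 1) :
    ContinuousOn (fun t : ℝ => t ^ p * Real.log (1 / t) / (1 - t ^ p) ^ 2) (Set.Icc 0 x) := by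
  intro t ht
  rcases eq_or_lt_of_le ht.1 with h0 | h0
  · subst h0
    have hsub : Set.Icc (0:ℝ) x ⊆ insert 0 (Set.Ioi 0) := by
      intro s hs
      rcases eq_or_lt_of_le hs.1 with h | h
      · exact Or.inl h.symm
      · exact Or.inr h
    refine ContinuousWithinAt.mono ?_ hsub
    rw [continuousWithinAt_insert_self]
    have hval : (fun t : ℝ => t ^ p * Real.log (1 / t) / (1 - t ^ p) ^ 2) 0 = 0 := by
      simp [Real.zero_rpow hp.ne']
    unfold ContinuousWithinAt
    rw [hval]
    have h2 : Tendsto (fun t : ℝ => (1 - t ^ p) ^ 2) (𝓝[>] 0) (𝓝 1) := by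
      have := ((tendsto_const_nhds : Tendsto (fun _ : ℝ => (1:ℝ)) (𝓝[>] 0) (𝓝 1)).sub
        (tendsto_rpow0 hp)).pow 2
      simpa using this
    have h3 : Tendsto (fun t : ℝ => t ^ p * Real.log (1 / t) / (1 - t ^ p) ^ 2) (𝓝[>] 0)
        (𝓝 (0 / 1)) := (tendsto_aux hp).div h2 one_ne_zero
    rw [zero_div] at h3
    exact h3
  · have htx1 : t < 1 := lt_of_le_of_lt ht.2 hx1
    have h1 : ContinuousAt (fun s : ℝ => s ^ p) t :=
      Real.continuousAt_rpow_const t p (Or.inl h0.ne')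
    have h2 : ContinuousAt (fun s : ℝ => Real.log (1 / s)) t :=
      ContinuousAt.log (continuousAt_const.div continuousAt_id h0.ne') (by positivity)
    have hd : ((1:ℝ) - t ^ p) ^ 2 ≠ 0 :=
      pow_ne_zero _ (sub_ne_zero.mpr (Real.rpow_lt_one h0.le htx1 hp).ne')
    exact ((h1.mul h2).div ((continuousAt_const.sub h1).pow 2) hd).continuousWithinAt

private lemma contOn_F {p x : ℝ} (hp : 0 < p) (hx0 : 0 < x) (hx1 : x < 1) :
    ContinuousOn
      (fun t : ℝ => t ^ p * (t ^ p + 1) * (Real.log (1 / t)) ^ 2 / (1 - t ^ p) ^ 3)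
      (Set.Icc 0 x) := by
  intro t ht
  rcases eq_or_lt_of_le ht.1 with h0 | h0
  · subst h0
    have hsub : Set.Icc (0:ℝ) x ⊆ insert 0 (Set.Ioi 0) := by
      intro s hs
      rcases eq_or_lt_of_le hs.1 with h | h
      · exact Or.inl h.symm
      · exact Or.inr h
    refine ContinuousWithinAt.mono ?_ hsub
    rw [continuousWithinAt_insert_self]
    have hval : (fun t : ℝ => t ^ p * (t ^ p + 1) * (Real.log (1 / t)) ^ 2 / (1 - t ^ p) ^ 3) 0 = 0 := by
      simp [Real.zero_rpow hp.ne']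
    unfold ContinuousWithinAt
    rw [hval]
    have hhalf : 0 < p / 2 := by linarith
    have hnum : Tendsto (fun t : ℝ => (t ^ (p/2) * Real.log (1 / t)) ^ 2 * (t ^ p + 1))
        (𝓝[>] 0) (𝓝 0) := by
      have := ((tendsto_aux hhalf).pow 2).mul ((tendsto_rpow0 hp).add
        (tendsto_const_nhds : Tendsto (fun _ : ℝ => (1:ℝ)) (𝓝[>] 0) (𝓝 1)))
      simpa using this
    have hden : Tendsto (fun t : ℝ => (1 - t ^ p) ^ 3) (𝓝[>] 0) (𝓝 1) := by
      have := ((tendsto_const_nhds : Tendsto (fun _ : ℝ => (1:ℝ)) (𝓝[>] 0) (𝓝 1)).sub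
        (tendsto_rpow0 hp)).pow 3
      simpa using this
    have := hnum.div hden one_ne_zero
    rw [div_one] at this
    apply this.congr'
    filter_upwards [self_mem_nhdsWithin] with t ht
    have hsq : (t ^ (p/2)) ^ 2 = t ^ p := by
      rw [← Real.rpow_natCast (t ^ (p/2)) 2, ← Real.rpow_mul (le_of_lt ht)]
      norm_num
    simp only [Pi.div_apply]
    rw [mul_pow, hsq]
    ring
  · have htx1 : t < 1 := lt_of_le_of_lt ht.2 hx1
    have h1 : ContinuousAt (fun s : ℝ => s ^ p) t :=
      Real.continuousAt_rpow_const t p (Or.inl h0.ne')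
    have h2 : ContinuousAt (fun s : ℝ => Real.log (1 / s)) t :=
      ContinuousAt.log (continuousAt_const.div continuousAt_id h0.ne') (by positivity)
    have hd : ((1:ℝ) - t ^ p) ^ 3 ≠ 0 :=
      pow_ne_zero _ (sub_ne_zero.mpr (Real.rpow_lt_one h0.le htx1 hp).ne')
    exact (((h1.mul (h1.add continuousAt_const)).mul (h2.pow 2)).div
      ((continuousAt_const.sub h1).pow 3) hd).continuousWithinAt

theorem tanh_ratio_inequality (p x : ℝ) (hp : 0 < p) (hx : x ∈ Set.Ioo (0:ℝ) 1) :
    (x ^ p + 1) * Real.log (1 / x) / (1 - x ^ p)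
      < (∫ t in (0:ℝ)..x, t ^ p * (t ^ p + 1) * (Real.log (1 / t)) ^ 2 / (1 - t ^ p) ^ 3)
        / (∫ t in (0:ℝ)..x, t ^ p * Real.log (1 / t) / (1 - t ^ p) ^ 2) ∧
    2 * x ^ p * Real.log (1 / x) / (1 - x ^ p)
      < (x ^ p + 1) * Real.log (1 / x) / (1 - x ^ p) := by
  obtain ⟨hx0, hx1⟩ := hx
  set g : ℝ → ℝ := fun t => t ^ p * Real.log (1 / t) / (1 - t ^ p) ^ 2 with hg
  set F : ℝ → ℝ := fun t => t ^ p * (t ^ p + 1) * (Real.log (1 / t)) ^ 2 / (1 - t ^ p) ^ 3 with hF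
  set c : ℝ := (x ^ p + 1) * Real.log (1 / x) / (1 - x ^ p) with hc
  have hgint : IntervalIntegrable g MeasureTheory.volume 0 x := by
    apply ContinuousOn.intervalIntegrable
    rw [Set.uIcc_of_le hx0.le]
    exact contOn_g hp hx0 hx1
  have hFint : IntervalIntegrable F MeasureTheory.volume 0 x := by
    apply ContinuousOn.intervalIntegrable
    rw [Set.uIcc_of_le hx0.le]
    exact contOn_F hp hx0 hx1
  have hgpos : ∀ t ∈ Set.Ioo 0 x, 0 < g t := by
    intro t ht
    have ht1 : t < 1 := ht.2.trans hx1
    have h1 : 0 < t ^ p := Real.rpow_pos_of_pos ht.1 p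
    have h2 : 0 < Real.log (1 / t) := by
      rw [one_div, Real.log_inv]
      linarith [Real.log_neg ht.1 ht1]
    have h3 : t ^ p < 1 := Real.rpow_lt_one ht.1.le ht1 hp
    have h4 : (0:ℝ) < (1 - t ^ p) ^ 2 := pow_pos (by linarith) 2
    exact div_pos (mul_pos h1 h2) h4
  have hI : 0 < ∫ t in (0:ℝ)..x, g t :=
    intervalIntegral.intervalIntegral_pos_of_pos_on hgint hgpos hx0
  have hKey : 0 < ∫ t in (0:ℝ)..x, (F t - c * g t) := by
    apply intervalIntegral.intervalIntegral_pos_of_pos_on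
      (hFint.sub (hgint.const_mul c)) _ hx0
    intro t ht
    have ht1 : t < 1 := ht.2.trans hx1
    have h3 : t ^ p < 1 := Real.rpow_lt_one ht.1.le ht1 hp
    have hne : (1:ℝ) - t ^ p ≠ 0 := sub_ne_zero.mpr h3.ne'
    have hfc : c < (t ^ p + 1) * Real.log (1 / t) / (1 - t ^ p) :=
      f_anti hp ht.1 ht.2 hx1
    have hgt := hgpos t ht
    have hFeq : F t = ((t ^ p + 1) * Real.log (1 / t) / (1 - t ^ p)) * g t := by
      simp only [hF, hg]
      field_simp
    have : 0 < ((t ^ p + 1) * Real.log (1 / t) / (1 - t ^ p) - c) * g t :=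
      mul_pos (sub_pos.mpr hfc) hgt
    nlinarith [this, hFeq]
  have hsplit : (∫ t in (0:ℝ)..x, (F t - c * g t))
      = (∫ t in (0:ℝ)..x, F t) - c * ∫ t in (0:ℝ)..x, g t := by
    rw [intervalIntegral.integral_sub hFint (hgint.const_mul c),
      intervalIntegral.integral_const_mul]
  constructor
  · rw [lt_div_iff₀ hI]
    rw [hsplit] at hKey
    linarith
  · have h3 : x ^ p < 1 := Real.rpow_lt_one hx0.le hx1 hp
    have hden : (0:ℝ) < 1 - x ^ p := by linarith
    have hL : 0 < Real.log (1 / x) := by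
      rw [one_div, Real.log_inv]
      linarith [Real.log_neg hx0 hx1]
    rw [div_lt_div_iff₀ hden hden]
    have hxp : 0 < x ^ p := Real.rpow_pos_of_pos hx0 p
    nlinarith [mul_pos (mul_pos hden hL) hden]
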